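/- With notation as in the induced-sequence setup: if {H_s} is a family of subsets of I totally ordered by inclusion such that for each s the restricted sequence (ξ_{H_s}) is a w-split exact sequence induced by (ξ) with respect to F(H_s), and H = ∪_s H_s, then ∪_s F(H_s) = F(H), ∪_s P(H_s) = P(H), ∪_s M(H_s) = M(H), and the sequence 0 → P(H) → F(H) → M(H) → 0 is a w-split exact sequence induced by (ξ) with respect to F(H). -/

import Mathlib

open CategoryTheory

universe u

section Defs
variable (R : Type u) [CommRing R]

/-- `J` is a Glaz–Vasconcelos ideal (GV-ideal): finitely generated and the natural map
`R → Hom_R(J, R)`, `r ↦ (x ↦ r•x)`, is an isomorphism. -/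
def IsGVIdeal (J : Ideal R) : Prop :=
  J.FG ∧ Function.Bijective fun r : R =>
    ((LinearMap.lsmul R R r).comp J.subtype : J →ₗ[R] R)

variable (M : Type u) [AddCommGroup M] [Module R M]

/-- `M` is GV-torsion: every element is killed by some GV-ideal. -/
def IsGVTorsion : Prop :=
  ∀ x : M, ∃ J : Ideal R, IsGVIdeal R J ∧ ∀ a ∈ J, a • x = 0

/-- `M` is GV-torsionfree: no nonzero element is killed by a GV-ideal. -/
def IsGVTorsionFree : Prop :=
  ∀ x : M, (∃ J : Ideal R, IsGVIdeal R J ∧ ∀ a ∈ J, a • x = 0) → x = 0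

/-- The w-splitting condition on the epimorphism `g` of a short exact sequence:
there are a GV-ideal `⟨d₁,…,dₙ⟩` and maps `hₖ` with `g ∘ hₖ = (dₖ•·)`. -/
def IsWSplitSeq {B C : Type u} [AddCommGroup B] [Module R B] [AddCommGroup C] [Module R C]
    (g : B →ₗ[R] C) : Prop :=
  ∃ (n : ℕ) (d : Fin n → R), IsGVIdeal R (Ideal.span (Set.range d)) ∧
    ∃ h : Fin n → (C →ₗ[R] B), ∀ k, ∀ c : C, g (h k c) = d k • c

/-- `M` is a w-split module: some short exact sequence `0 → K → P → M → 0` with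
`P` projective is w-split. -/
def IsWSplitModule : Prop :=
  ∃ (P : Type u) (_ : AddCommGroup P) (_ : Module R P), Module.Projective R P ∧
    ∃ g : P →ₗ[R] M, Function.Surjective g ∧ IsWSplitSeq R g

/-- The Ext group `Ext^n_R(M, N)` as an object of `ModuleCat R`. -/
noncomputable def extMod (n : ℕ) (N : Type u) [AddCommGroup N] [Module R N] : ModuleCat.{u} R :=
  ((Ext R (ModuleCat.{u} R) n).obj (Opposite.op (ModuleCat.of R M))).obj (ModuleCat.of R N)

/-- `M` is a w-module: GV-torsionfree and `Ext¹_R(R/J, M) = 0` for all GV-ideals `J`. -/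
def IsWModule : Prop :=
  IsGVTorsionFree R M ∧
    ∀ J : Ideal R, IsGVIdeal R J → Subsingleton (extMod R (R ⧸ J) 1 M)

/-- `ι : M →ₗ E` exhibits `E` as a w-envelope `M_w` of the GV-torsionfree module `M`:
`E` is a w-module containing `M` with GV-torsion quotient `E/M`. -/
def IsWEnvelope (E : Type u) [AddCommGroup E] [Module R E] (ι : M →ₗ[R] E) : Prop :=
  Function.Injective ι ∧ IsWModule R E ∧ IsGVTorsion R (E ⧸ LinearMap.range ι)

/-- `M` is w-projective: `Ext¹_R(L(M), N)` is GV-torsion for every GV-torsionfree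
w-module `N`, where `L(M) = (M/tor_GV(M))_w`. -/
def IsWProjective : Prop :=
  ∀ (T : Submodule R M),
    (∀ x : M, x ∈ T ↔ ∃ J : Ideal R, IsGVIdeal R J ∧ ∀ a ∈ J, a • x = 0) →
    ∀ (L : Type u) (_ : AddCommGroup L) (_ : Module R L) (ι : (M ⧸ T) →ₗ[R] L),
      IsWEnvelope R (M ⧸ T) L ι →
      ∀ (N : Type u) (_ : AddCommGroup N) (_ : Module R N),
        IsGVTorsionFree R N → IsWModule R N → IsGVTorsion R (extMod R L 1 N)

/-- `I` is a w-ideal: `I_w = I`, i.e. any `x` with `Jx ⊆ I` for some GV-ideal `J`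
already lies in `I`. -/
def IsWIdeal (I : Ideal R) : Prop :=
  ∀ x : R, (∃ J : Ideal R, IsGVIdeal R J ∧ ∀ a ∈ J, a * x ∈ I) → x ∈ I

/-- `I` is a maximal w-ideal: maximal among proper w-ideals of `R`. -/
def IsMaximalWIdeal (I : Ideal R) : Prop :=
  I ≠ ⊤ ∧ IsWIdeal R I ∧ ∀ I' : Ideal R, IsWIdeal R I' → I' ≠ ⊤ → I ≤ I' → I = I'

end Defs


/-- Unions of induced w-split subsequences: for a chain `{H_s}` of subsets of `I` with each
restricted sequence induced, setting `H = ⋃ H_s` one has `∪ F(H_s) = F(H)`,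
`∪ P(H_s) = P(H)`, `∪ M(H_s) = M(H)`, and the sequence for `H` is again induced. -/
theorem stmt18 {R : Type u} [CommRing R] {P F M : Type u}
    [AddCommGroup P] [Module R P] [AddCommGroup F] [Module R F] [AddCommGroup M] [Module R M]
    (f : P →ₗ[R] F) (g : F →ₗ[R] M)
    (hf : Function.Injective f) (hg : Function.Surjective g)
    (hfg : LinearMap.range f = LinearMap.ker g)
    {I : Type u} (Fi : I → Submodule R F)
    (hindep : iSupIndep Fi) (hsum : iSup Fi = ⊤)
    (n : ℕ) (d : Fin n → R) (hGV : IsGVIdeal R (Ideal.span (Set.range d)))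
    (h : Fin n → (M →ₗ[R] F)) (hsplit : ∀ k, ∀ x : M, g (h k x) = d k • x)
    (S : Set (Set I)) (hne : S.Nonempty) (hchain : IsChain (· ⊆ ·) S)
    (hind : ∀ Hs ∈ S,
      ∀ k, Submodule.map (h k) (Submodule.map g (⨆ j ∈ Hs, Fi j)) ≤ ⨆ j ∈ Hs, Fi j) :
    (⋃ Hs ∈ S, ((⨆ j ∈ Hs, Fi j : Submodule R F) : Set F)) =
        ((⨆ j ∈ ⋃₀ S, Fi j : Submodule R F) : Set F) ∧
    (⋃ Hs ∈ S,
        ((Submodule.comap f (LinearMap.ker g ⊓ ⨆ j ∈ Hs, Fi j) : Submodule R P) : Set P)) =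
        ((Submodule.comap f (LinearMap.ker g ⊓ ⨆ j ∈ ⋃₀ S, Fi j) : Submodule R P) : Set P) ∧
    (⋃ Hs ∈ S, ((Submodule.map g (⨆ j ∈ Hs, Fi j) : Submodule R M) : Set M)) =
        ((Submodule.map g (⨆ j ∈ ⋃₀ S, Fi j) : Submodule R M) : Set M) ∧
    (∀ k, Submodule.map (h k) (Submodule.map g (⨆ j ∈ ⋃₀ S, Fi j)) ≤ ⨆ j ∈ ⋃₀ S, Fi j) := by

  have hNe : Nonempty S := hne.to_subtype
  set T : Set I → Submodule R F := fun Hs => ⨆ j ∈ Hs, Fi j with hT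
  have hTmono : Monotone T := fun a b hab => biSup_mono hab
  have hdir : Directed (· ≤ ·) (fun s : S => T s) := by
    intro a b
    rcases hchain.total a.2 b.2 with hab | hba
    · exact ⟨b, hTmono hab, le_rfl⟩
    · exact ⟨a, le_rfl, hTmono hba⟩
  have hsup : T (⋃₀ S) = ⨆ s : S, T s := by
    simp only [hT, iSup_sUnion, iSup_subtype]
  have hcoe : ((T (⋃₀ S) : Submodule R F) : Set F) = ⋃ Hs ∈ S, ((T Hs : Submodule R F) : Set F) := by
    rw [hsup, Submodule.coe_iSup_of_directed _ hdir, Set.iUnion_subtype]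
  have hmemF : ∀ x : F, x ∈ T (⋃₀ S) ↔ ∃ Hs ∈ S, x ∈ T Hs := by
    intro x
    constructor
    · intro hx
      have : x ∈ (⋃ Hs ∈ S, ((T Hs : Submodule R F) : Set F)) := hcoe ▸ hx
      simpa using this
    · rintro ⟨Hs, hHs, hx⟩
      exact hTmono (Set.subset_sUnion_of_mem hHs) hx
  refine ⟨hcoe.symm, ?_, ?_, ?_⟩
  · ext x
    simp only [Set.mem_iUnion, SetLike.mem_coe, Submodule.mem_comap, Submodule.mem_inf,
      LinearMap.mem_ker, hmemF]
    constructor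
    · rintro ⟨Hs, hHs, h1, h2⟩
      exact ⟨h1, (hmemF (f x)).2 ⟨Hs, hHs, h2⟩⟩
    · rintro ⟨h1, h2⟩
      obtain ⟨Hs, hHs, h3⟩ := (hmemF (f x)).1 h2
      exact ⟨Hs, hHs, h1, h3⟩
  · ext m
    simp only [Set.mem_iUnion, SetLike.mem_coe, Submodule.mem_map, hmemF]
    constructor
    · rintro ⟨Hs, hHs, x, hx, rfl⟩
      exact ⟨x, (hmemF x).2 ⟨Hs, hHs, hx⟩, rfl⟩
    · rintro ⟨x, hx', rfl⟩
      obtain ⟨Hs, hHs, hx⟩ := (hmemF x).1 hx'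
      exact ⟨Hs, hHs, x, hx, rfl⟩
  · intro k m hm
    rcases hm with ⟨c, ⟨x, hx, rfl⟩, rfl⟩
    rcases (hmemF x).1 hx with ⟨Hs, hHs, hxs⟩
    have : h k (g x) ∈ T Hs := hind Hs hHs k ⟨g x, ⟨x, hxs, rfl⟩, rfl⟩
    exact hTmono (Set.subset_sUnion_of_mem hHs) this
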